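/- arXiv:1502.06658 — 3 statements merged into one kernel-verified Lean document; each statement's English description precedes it below -/
import Mathlib

section
/- Let B be a separable unital C*-algebra, let C ⊆ B be a unital C*-subalgebra (containing the unit of B), and let E : B → C be a linear map such that τ(b) = τ(E(b)) for every tracial state τ of B and every b ∈ B. Let A be a unital C*-algebra with T(A) ≠ ∅, let λ : T(A) → T(B) be a surjective continuous affine map, and let φ : C → A be a unital injective *-homomorphism such that τ(φ(c)) = λ(τ)(c) for all c ∈ C and all τ ∈ T(A). Suppose ψ_n : B → A (n ∈ ℕ) are unital completely positive linear contractions such that lim_{n→∞} ‖ψ_n(ab) − ψ_n(a)ψ_n(b)‖ = 0 for all a, b ∈ B, and lim_{n→∞} ‖ψ_n(c) − φ(c)‖ = 0 for all c ∈ C. Then for every τ ∈ T(A) and every b ∈ B, lim_{n→∞} τ(ψ_n(b)) = λ(τ)(b). -/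
open scoped ComplexOrder
open Matrix

/-- A state on a unital C*-algebra `A`, as an element of the weak* dual. -/
def IsStateW {A : Type*} [NormedRing A] [NormedAlgebra ℂ A] [PartialOrder A]
    (ρ : WeakDual ℂ A) : Prop :=
  ρ 1 = 1 ∧ ∀ a : A, 0 ≤ a → 0 ≤ ρ a

/-- A tracial state on a unital C*-algebra, as an element of the weak* dual. -/
def IsTracialStateW {A : Type*} [NormedRing A] [NormedAlgebra ℂ A] [PartialOrder A]
    (ρ : WeakDual ℂ A) : Prop :=
  IsStateW ρ ∧ ∀ a b : A, ρ (a * b) = ρ (b * a)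

/-- Complete positivity, via positivity of the induced maps on matrix algebras; a matrix over
a C*-algebra is positive exactly when it is of the form `Nᴴ * N`. -/
def IsCompletelyPositive {A B : Type*} [NonUnitalNonAssocSemiring A] [StarRing A]
    [NonUnitalNonAssocSemiring B] [StarRing B] (Φ : A → B) : Prop :=
  ∀ (n : ℕ) (M : Matrix (Fin n) (Fin n) A),
    (∃ N : Matrix (Fin n) (Fin n) A, M = Nᴴ * N) →
    ∃ N' : Matrix (Fin n) (Fin n) B, M.map Φ = N'ᴴ * N'

/-- `B` a separable unital C*-algebra, `S ⊆ B` a unital C*-subalgebra,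
`E : B → B` a linear map with range in `S` with `τ (E b) = τ b` for every tracial state `τ`
of `B`; `A` a unital C*-algebra with `T(A) ≠ ∅`, `Λ : T(A) → T(B)` a surjective continuous
affine map, `φ : S → A` a unital injective *-homomorphism with `τ (φ c) = Λ τ c` for all
`c ∈ S`, `τ ∈ T(A)`; `ψₙ : B → A` unital completely positive contractions which are
asymptotically multiplicative and asymptotically agree with `φ` on `S`.  Then
`τ (ψₙ b) → Λ τ b` for every `τ ∈ T(A)` and `b ∈ B`. -/
theorem statement3
    {B : Type*} [CStarAlgebra B] [PartialOrder B] [StarOrderedRing B]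
    [TopologicalSpace.SeparableSpace B]
    {A : Type*} [CStarAlgebra A] [PartialOrder A] [StarOrderedRing A]
    (S : StarSubalgebra ℂ B) (hS : IsClosed (S : Set B))
    (E : B →ₗ[ℂ] B) (hES : ∀ b : B, E b ∈ S)
    (hE : ∀ σ : WeakDual ℂ B, IsTracialStateW σ → ∀ b : B, σ b = σ (E b))
    (hTA : ∃ τ : WeakDual ℂ A, IsTracialStateW τ)
    (Λ : WeakDual ℂ A → WeakDual ℂ B)
    (hΛmaps : ∀ τ : WeakDual ℂ A, IsTracialStateW τ → IsTracialStateW (Λ τ))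
    (hΛsurj : ∀ σ : WeakDual ℂ B, IsTracialStateW σ →
      ∃ τ : WeakDual ℂ A, IsTracialStateW τ ∧ Λ τ = σ)
    (hΛcont : ContinuousOn Λ {τ | IsTracialStateW τ})
    (hΛaff : ∀ τ₁ τ₂ : WeakDual ℂ A, IsTracialStateW τ₁ → IsTracialStateW τ₂ →
      ∀ s : ℝ, 0 ≤ s → s ≤ 1 →
        Λ ((s : ℂ) • τ₁ + ((1 - s : ℝ) : ℂ) • τ₂)
          = (s : ℂ) • Λ τ₁ + ((1 - s : ℝ) : ℂ) • Λ τ₂)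
    (φ : S →⋆ₐ[ℂ] A) (hφinj : Function.Injective φ)
    (hφΛ : ∀ τ : WeakDual ℂ A, IsTracialStateW τ → ∀ c : S, τ (φ c) = Λ τ (c : B))
    (ψ : ℕ → B →L[ℂ] A)
    (hψ1 : ∀ n, ψ n 1 = 1)
    (hψcp : ∀ n, IsCompletelyPositive (ψ n))
    (hψnorm : ∀ n, ‖ψ n‖ ≤ 1)
    (hψmult : ∀ a b : B,
      Filter.Tendsto (fun n => ‖ψ n (a * b) - ψ n a * ψ n b‖) Filter.atTop (nhds 0))
    (hψφ : ∀ c : S,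
      Filter.Tendsto (fun n => ‖ψ n (c : B) - φ c‖) Filter.atTop (nhds 0)) :
    ∀ τ : WeakDual ℂ A, IsTracialStateW τ → ∀ b : B,
      Filter.Tendsto (fun n => τ (ψ n b)) Filter.atTop (nhds (Λ τ b)) := by
    classical
  intro τ hτ b
  -- `τ` as an element of the normed dual
  set τ' : StrongDual ℂ A := WeakDual.toStrongDual τ with hτ'def
  have hτ'app : ∀ x : A, τ' x = τ x := fun _ => rfl
  -- positivity of each `ψ n`
  have hψpos : ∀ (n : ℕ) (a : B), 0 ≤ a → 0 ≤ ψ n a := by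
    intro n a ha
    obtain ⟨N', hN'⟩ := hψcp n 1 (Matrix.of fun _ _ => a)
      ⟨Matrix.of fun _ _ => CFC.sqrt a, by
        ext i j
        simp only [Matrix.mul_apply, Matrix.conjTranspose_apply, Fin.sum_univ_one,
          Matrix.of_apply]
        rw [IsSelfAdjoint.of_nonneg (CFC.sqrt_nonneg (a := a)),
          CFC.sqrt_mul_sqrt_self a ha]⟩
    have h00 := congrFun (congrFun hN' 0) 0
    have : ψ n a = star (N' 0 0) * N' 0 0 := by
      simpa [Matrix.map_apply, Matrix.mul_apply, Matrix.conjTranspose_apply,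
        Fin.sum_univ_one] using h00
    rw [this]
    exact star_mul_self_nonneg _
  -- boundedness of the sequences
  have hbnd : ∀ (x : B) (n : ℕ), ‖τ (ψ n x)‖ ≤ ‖τ'‖ * ‖x‖ := by
    intro x n
    rw [← hτ'app]
    calc ‖τ' (ψ n x)‖ ≤ ‖τ'‖ * ‖ψ n x‖ := τ'.le_opNorm _
      _ ≤ ‖τ'‖ * ‖x‖ := by
          refine mul_le_mul_of_nonneg_left ?_ (norm_nonneg τ')
          exact le_trans ((ψ n).le_opNorm x)
            (mul_le_of_le_one_left (norm_nonneg x) (hψnorm n))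
  -- the small-difference helper
  have hsmall : ∀ (u v : ℕ → A),
      Filter.Tendsto (fun n => ‖u n - v n‖) Filter.atTop (nhds 0) →
      Filter.Tendsto (fun n => τ (u n) - τ (v n)) Filter.atTop (nhds 0) := by
    intro u v huv
    rw [tendsto_zero_iff_norm_tendsto_zero]
    have hbd : ∀ n, ‖τ (u n) - τ (v n)‖ ≤ ‖τ'‖ * ‖u n - v n‖ := by
      intro n
      rw [← hτ'app, ← hτ'app, ← map_sub]
      exact τ'.le_opNorm _
    have hlim : Filter.Tendsto (fun n => ‖τ'‖ * ‖u n - v n‖) Filter.atTop (nhds 0) := by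
      simpa using huv.const_mul ‖τ'‖
    exact squeeze_zero (fun n => norm_nonneg _) hbd hlim
  rw [Filter.tendsto_iff_ultrafilter]
  intro U hU
  -- existence of limits along `U`
  have hconv : ∀ x : B, ∃ z : ℂ,
      Filter.Tendsto (fun n => τ (ψ n x)) (U : Filter ℕ) (nhds z) := by
    intro x
    have hcp : IsCompact (Metric.closedBall (0 : ℂ) (‖τ'‖ * ‖x‖)) :=
      isCompact_closedBall _ _
    have hle : (U.map (fun n => τ (ψ n x)) : Filter ℂ) ≤
        Filter.principal (Metric.closedBall (0 : ℂ) (‖τ'‖ * ‖x‖)) := by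
      simp only [Filter.le_principal_iff, Ultrafilter.coe_map, Filter.mem_map]
      apply Filter.univ_mem'
      intro n
      simpa [Metric.mem_closedBall, dist_zero_right] using hbnd x n
    obtain ⟨z, _, hz⟩ := hcp.ultrafilter_le_nhds (U.map fun n => τ (ψ n x)) hle
    exact ⟨z, hz⟩
  choose L hL using hconv
  -- the limit functional is linear and bounded
  have hLadd : ∀ x y : B, L (x + y) = L x + L y := by
    intro x y
    refine tendsto_nhds_unique (hL (x + y)) ?_
    have : (fun n => τ (ψ n (x + y))) = fun n => τ (ψ n x) + τ (ψ n y) := by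
      funext n; rw [map_add, map_add]
    rw [this]
    exact (hL x).add (hL y)
  have hLsmul : ∀ (c : ℂ) (x : B), L (c • x) = c * L x := by
    intro c x
    refine tendsto_nhds_unique (hL (c • x)) ?_
    have : (fun n => τ (ψ n (c • x))) = fun n => c * τ (ψ n x) := by
      funext n; rw [_root_.map_smul, _root_.map_smul, smul_eq_mul]
    rw [this]
    exact (hL x).const_mul c
  have hLbnd : ∀ x : B, ‖L x‖ ≤ ‖τ'‖ * ‖x‖ := by
    intro x
    exact le_of_tendsto (hL x).norm (Filter.Eventually.of_forall fun n => hbnd x n)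
  set σlin : B →ₗ[ℂ] ℂ :=
    { toFun := L
      map_add' := hLadd
      map_smul' := fun c x => hLsmul c x } with hσlin
  set σ : B →L[ℂ] ℂ := σlin.mkContinuous ‖τ'‖ hLbnd with hσdef
  set σW : WeakDual ℂ B := StrongDual.toWeakDual σ with hσWdef
  have hσWapp : ∀ x : B, σW x = L x := fun _ => rfl
  -- σW is a tracial state
  have hσWtr : IsTracialStateW σW := by
    refine ⟨⟨?_, ?_⟩, ?_⟩
    · rw [hσWapp]
      refine tendsto_nhds_unique (hL 1) ?_
      have : (fun n => τ (ψ n (1 : B))) = fun _ => (1 : ℂ) := by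
        funext n; rw [hψ1 n, hτ.1.1]
      rw [this]
      exact tendsto_const_nhds
    · intro a ha
      rw [hσWapp]
      have hcl : IsClosed {z : ℂ | 0 ≤ z} := by
        have : {z : ℂ | 0 ≤ z} = {z : ℂ | 0 ≤ z.re} ∩ {z : ℂ | z.im = 0} := by
          ext z; simp [Complex.nonneg_iff, eq_comm]
        rw [this]
        exact (isClosed_le continuous_const Complex.continuous_re).inter
          (isClosed_eq Complex.continuous_im continuous_const)
      exact hcl.mem_of_tendsto (hL a)
        (Filter.Eventually.of_forall fun n => hτ.1.2 _ (hψpos n a ha))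
    · intro x y
      rw [hσWapp, hσWapp]
      have h1 := hsmall (fun n => ψ n (x * y)) (fun n => ψ n x * ψ n y) (hψmult x y)
      have h2 := hsmall (fun n => ψ n (y * x)) (fun n => ψ n y * ψ n x) (hψmult y x)
      have key : Filter.Tendsto (fun n => τ (ψ n (x * y)) - τ (ψ n (y * x)))
          Filter.atTop (nhds 0) := by
        have h3 := h1.sub h2
        rw [sub_zero] at h3
        have heq : (fun n => τ (ψ n (x * y)) - τ (ψ n (y * x))) =
            fun n => (τ (ψ n (x * y)) - τ (ψ n x * ψ n y)) -
              (τ (ψ n (y * x)) - τ (ψ n y * ψ n x)) := by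
          funext n
          rw [hτ.2 (ψ n x) (ψ n y)]
          ring
        rw [heq]
        exact h3
      have hkeyU : Filter.Tendsto (fun n => τ (ψ n (x * y)) - τ (ψ n (y * x)))
          (U : Filter ℕ) (nhds 0) := key.mono_left hU
      have hsub : Filter.Tendsto (fun n => τ (ψ n (x * y)) - τ (ψ n (y * x)))
          (U : Filter ℕ) (nhds (L (x * y) - L (y * x))) := (hL (x * y)).sub (hL (y * x))
      have := tendsto_nhds_unique hsub hkeyU
      exact sub_eq_zero.mp this
  -- conclude
  have hEb : L b = L (E b) := by
    have := hE σW hσWtr b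
    rwa [hσWapp, hσWapp] at this
  set c : S := ⟨E b, hES b⟩ with hc
  have h2 : Filter.Tendsto (fun n => τ (ψ n (E b))) Filter.atTop (nhds (τ (φ c))) := by
    have h0 := hsmall (fun n => ψ n (E b)) (fun _ => φ c) (hψφ c)
    have := h0.add (tendsto_const_nhds (x := τ (φ c)) (f := Filter.atTop (α := ℕ)))
    simpa using this
  have h3 : L (E b) = τ (φ c) := tendsto_nhds_unique (hL (E b)) (h2.mono_left hU)
  have h4 : τ (φ c) = Λ τ (E b) := hφΛ τ hτ c
  have h5 : Λ τ b = Λ τ (E b) := hE (Λ τ) (hΛmaps τ hτ) b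
  have hfinal : L b = Λ τ b := by rw [hEb, h3, h4, h5]
  rw [← hfinal]
  exact hL b
end

section
/- Let B be a separable unital C*-algebra, let C ⊆ B be a unital C*-subalgebra (containing the unit of B), and let E : B → C be a linear map such that τ(b) = τ(E(b)) for every tracial state τ of B and every b ∈ B. Let A be a unital C*-algebra with T(A) ≠ ∅, let λ : T(A) → T(B) be a surjective continuous affine map, and let φ : C → A be a unital injective *-homomorphism such that τ(φ(c)) = λ(τ)(c) for all c ∈ C and all τ ∈ T(A). Suppose ψ_n : B → A (n ∈ ℕ) are unital completely positive linear contractions such that lim_{n→∞} ‖ψ_n(ab) − ψ_n(a)ψ_n(b)‖ = 0 for all a, b ∈ B, and lim_{n→∞} ‖ψ_n(c) − φ(c)‖ = 0 for all c ∈ C. Then for every ε > 0 and every finite subset F ⊆ B there exists N ≥ 1 such that for all n ≥ N and all a ∈ F, sup_{τ ∈ T(A)} |τ(ψ_n(a)) − λ(τ)(a)| < ε. -/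
open scoped ComplexOrder
open Matrix

namespace St4Aux

open Filter Topology

lemma isClosed_nonnegC : IsClosed {z : ℂ | 0 ≤ z} := by
  have h : {z : ℂ | 0 ≤ z} = Complex.re ⁻¹' Set.Ici 0 ∩ Complex.im ⁻¹' {0} := by
    ext z
    simp only [Set.mem_setOf_eq, Complex.le_def, Set.mem_inter_iff, Set.mem_preimage,
      Set.mem_Ici, Set.mem_singleton_iff, Complex.zero_re, Complex.zero_im]
    tauto
  rw [h]
  exact (isClosed_Ici.preimage Complex.continuous_re).inter
    (isClosed_singleton.preimage Complex.continuous_im)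

variable {A : Type*} [CStarAlgebra A] [PartialOrder A] [StarOrderedRing A]

lemma state_selfAdjoint_bound (ρ : WeakDual ℂ A) (h : IsStateW ρ) {b : A}
    (hb : IsSelfAdjoint b) : ‖ρ b‖ ≤ ‖b‖ := by
  have halg : ∀ r : ℝ, ρ (algebraMap ℝ A r) = (r : ℂ) := by
    intro r
    have : algebraMap ℝ A r = (r : ℂ) • (1 : A) := by
      rw [Algebra.algebraMap_eq_smul_one]
      norm_cast
    rw [this, _root_.map_smul, h.1, smul_eq_mul, mul_one]
  have h1 : 0 ≤ ρ (algebraMap ℝ A ‖b‖ - b) :=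
    h.2 _ (sub_nonneg.mpr hb.le_algebraMap_norm_self)
  have h2 : 0 ≤ ρ (b - (-(algebraMap ℝ A ‖b‖))) :=
    h.2 _ (sub_nonneg.mpr hb.neg_algebraMap_norm_le_self)
  rw [map_sub, halg] at h1
  rw [map_sub, map_neg, halg, sub_neg_eq_add] at h2
  rw [Complex.le_def] at h1 h2
  simp only [Complex.zero_re, Complex.zero_im, Complex.sub_re, Complex.sub_im,
    Complex.add_re, Complex.add_im, Complex.ofReal_re, Complex.ofReal_im] at h1 h2
  have him : (ρ b).im = 0 := by linarith [h1.2, h2.2]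
  have : ρ b = ((ρ b).re : ℂ) := by
    apply Complex.ext <;> simp [him]
  rw [this, Complex.norm_real, Real.norm_eq_abs]
  rw [abs_le]
  constructor <;> [linarith [h2.1]; linarith [h1.1]]

lemma state_bound (ρ : WeakDual ℂ A) (h : IsStateW ρ) (b : A) : ‖ρ b‖ ≤ 2 * ‖b‖ := by
  set h1 : A := (2⁻¹ : ℂ) • (b + star b) with hh1
  set k : A := ((Complex.I) / 2) • (star b - b) with hk
  have hdecomp : b = h1 + Complex.I • k := by
    rw [hh1, hk, smul_smul]
    have : Complex.I * (Complex.I / 2) = -(2⁻¹ : ℂ) := by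
      rw [div_eq_mul_inv, ← mul_assoc, Complex.I_mul_I]; ring
    rw [this]
    module
  have hh1sa : IsSelfAdjoint h1 := by
    rw [_root_.IsSelfAdjoint, hh1, star_smul, star_add, star_star]
    rw [show star (2⁻¹ : ℂ) = (2⁻¹ : ℂ) by simp [Complex.star_def]]
    rw [add_comm]
  have hksa : IsSelfAdjoint k := by
    rw [_root_.IsSelfAdjoint, hk, star_smul, star_sub, star_star]
    rw [show star (Complex.I / 2) = -(Complex.I / 2) by
      simp [Complex.star_def, neg_div]]
    module
  have hnh1 : ‖h1‖ ≤ ‖b‖ := by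
    rw [hh1, norm_smul]
    calc ‖(2⁻¹ : ℂ)‖ * ‖b + star b‖ ≤ 2⁻¹ * (‖b‖ + ‖star b‖) := by
          rw [show ‖(2⁻¹ : ℂ)‖ = 2⁻¹ by simp]
          have := norm_add_le b (star b)
          nlinarith [norm_nonneg (b + star b)]
      _ = ‖b‖ := by rw [norm_star]; ring
  have hnk : ‖k‖ ≤ ‖b‖ := by
    rw [hk, norm_smul]
    calc ‖Complex.I / 2‖ * ‖star b - b‖ ≤ 2⁻¹ * (‖star b‖ + ‖b‖) := by
          rw [show ‖Complex.I / 2‖ = 2⁻¹ by simp [norm_div, Complex.norm_I]]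
          have := norm_sub_le (star b) b
          nlinarith [norm_nonneg (star b - b)]
      _ = ‖b‖ := by rw [norm_star]; ring
  have hρ : ρ b = ρ h1 + Complex.I * ρ k := by
    rw [hdecomp, map_add, _root_.map_smul ρ Complex.I k, smul_eq_mul]
  calc ‖ρ b‖ = ‖ρ h1 + Complex.I * ρ k‖ := by rw [hρ]
    _ ≤ ‖ρ h1‖ + ‖Complex.I * ρ k‖ := norm_add_le _ _
    _ = ‖ρ h1‖ + ‖ρ k‖ := by rw [norm_mul, Complex.norm_I, one_mul]
    _ ≤ ‖b‖ + ‖b‖ := add_le_add ((state_selfAdjoint_bound ρ h hh1sa).trans hnh1)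
        ((state_selfAdjoint_bound ρ h hksa).trans hnk)
    _ = 2 * ‖b‖ := by ring


section cp
variable {B : Type*} [CStarAlgebra B] [PartialOrder B] [StarOrderedRing B]
variable {A : Type*} [CStarAlgebra A] [PartialOrder A] [StarOrderedRing A]

lemma cp_nonneg (ψ : B →L[ℂ] A) (hcp : IsCompletelyPositive ψ) {b : B} (hb : 0 ≤ b) :
    0 ≤ ψ b := by
  obtain ⟨c, hc⟩ : ∃ c : B, b = star c * c :=
    ⟨CFC.sqrt b, by
      rw [(IsSelfAdjoint.of_nonneg (CFC.sqrt_nonneg (a := b))).star_eq,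
        CFC.sqrt_mul_sqrt_self b hb]⟩
  obtain ⟨N', hN'⟩ := hcp 1 (Matrix.of fun _ _ => b)
    ⟨Matrix.of fun _ _ => c, by
      ext i j
      simp [Matrix.mul_apply, hc]⟩
  have h00 : ψ b = star (N' 0 0) * N' 0 0 := by
    have := congrFun (congrFun hN' 0) 0
    simpa [Matrix.mul_apply, Matrix.map_apply, Matrix.conjTranspose_apply] using this
  rw [h00]
  exact star_mul_self_nonneg _

end cp

section sets
variable {A : Type*} [CStarAlgebra A] [PartialOrder A] [StarOrderedRing A]

lemma isClosed_states : IsClosed {ρ : WeakDual ℂ A | IsStateW ρ} := by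
  have h : {ρ : WeakDual ℂ A | IsStateW ρ} =
      ((fun ρ : WeakDual ℂ A => ρ 1) ⁻¹' {1}) ∩
        ⋂ (a : {a : A // 0 ≤ a}),
          ((fun ρ : WeakDual ℂ A => ρ (a : A)) ⁻¹' {z : ℂ | 0 ≤ z}) := by
    ext ρ
    simp only [IsStateW, Set.mem_setOf_eq, Set.mem_inter_iff, Set.mem_preimage,
      Set.mem_singleton_iff, Set.mem_iInter, Subtype.forall]
  rw [h]
  exact (isClosed_singleton.preimage (WeakDual.eval_continuous 1)).inter
    (isClosed_iInter fun a => isClosed_nonnegC.preimage (WeakDual.eval_continuous _))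

lemma isClosed_tracialStates : IsClosed {ρ : WeakDual ℂ A | IsTracialStateW ρ} := by
  have h : {ρ : WeakDual ℂ A | IsTracialStateW ρ} =
      {ρ : WeakDual ℂ A | IsStateW ρ} ∩
        ⋂ (p : A × A),
          ((fun ρ : WeakDual ℂ A => ρ (p.1 * p.2) - ρ (p.2 * p.1)) ⁻¹' {0}) := by
    ext ρ
    simp only [IsTracialStateW, Set.mem_setOf_eq, Set.mem_inter_iff, Set.mem_iInter,
      Set.mem_preimage, Set.mem_singleton_iff, sub_eq_zero, Prod.forall]
  rw [h]
  exact isClosed_states.inter (isClosed_iInter fun p =>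
    isClosed_singleton.preimage ((WeakDual.eval_continuous _).sub
      (WeakDual.eval_continuous _)))

lemma isCompact_states : IsCompact {ρ : WeakDual ℂ A | IsStateW ρ} := by
  refine (WeakDual.isCompact_closedBall (𝕜 := ℂ) (E := A) 0 2).of_isClosed_subset
    isClosed_states ?_
  intro ρ hρ
  simp only [Set.mem_preimage, Metric.mem_closedBall, dist_zero_right]
  exact ContinuousLinearMap.opNorm_le_bound _ (by norm_num)
    fun x => state_bound ρ hρ x

lemma isCompact_tracialStates : IsCompact {ρ : WeakDual ℂ A | IsTracialStateW ρ} :=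
  isCompact_states.of_isClosed_subset isClosed_tracialStates fun ρ hρ => hρ.1

end sets

section cluster
open Filter

lemma clusterPt_eq_of_tendsto {X : Type*} [TopologicalSpace X] [T2Space X]
    {u : ℕ → X} {z L : X} (h : MapClusterPt z atTop u)
    (hL : Tendsto u atTop (𝓝 L)) : z = L :=
  eq_of_nhds_neBot (h.clusterPt.mono hL)

lemma clusterPt_mem_of_closed {X : Type*} [TopologicalSpace X]
    {u : ℕ → X} {z : X} {s : Set X} (h : MapClusterPt z atTop u)
    (hs : IsClosed s) (hu : ∀ k, u k ∈ s) : z ∈ s := by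
  have : ClusterPt z (𝓟 s) :=
    h.clusterPt.mono (le_principal_iff.mpr (Filter.mem_map.mpr
      (Filter.Eventually.of_forall hu)))
  exact hs.closure_eq ▸ mem_closure_iff_clusterPt.mpr this

end cluster


section key
open Filter

variable {B : Type*} [CStarAlgebra B] [PartialOrder B] [StarOrderedRing B]
variable {A : Type*} [CStarAlgebra A] [PartialOrder A] [StarOrderedRing A]

/-- Composition of a weak* functional with a continuous linear map. -/
noncomputable def compW (τ : WeakDual ℂ A) (f : B →L[ℂ] A) : WeakDual ℂ B :=
  ContinuousLinearMap.comp (show A →L[ℂ] ℂ from τ) f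

@[simp] lemma compW_apply (τ : WeakDual ℂ A) (f : B →L[ℂ] A) (b : B) :
    compW τ f b = τ (f b) := rfl

lemma key
    (S : StarSubalgebra ℂ B)
    (E : B →ₗ[ℂ] B) (hES : ∀ b : B, E b ∈ S)
    (hE : ∀ σ : WeakDual ℂ B, IsTracialStateW σ → ∀ b : B, σ b = σ (E b))
    (Λ : WeakDual ℂ A → WeakDual ℂ B)
    (hΛmaps : ∀ τ : WeakDual ℂ A, IsTracialStateW τ → IsTracialStateW (Λ τ))
    (φ : S →⋆ₐ[ℂ] A)
    (hφΛ : ∀ τ : WeakDual ℂ A, IsTracialStateW τ → ∀ c : S, τ (φ c) = Λ τ (c : B))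
    (ψ : ℕ → B →L[ℂ] A)
    (hψ1 : ∀ n, ψ n 1 = 1)
    (hψcp : ∀ n, IsCompletelyPositive (ψ n))
    (hψmult : ∀ a b : B,
      Tendsto (fun n => ‖ψ n (a * b) - ψ n a * ψ n b‖) atTop (𝓝 0))
    (hψφ : ∀ c : S, Tendsto (fun n => ‖ψ n (c : B) - φ c‖) atTop (𝓝 0))
    (a : B) (ε : ℝ) (hε : 0 < ε) :
    ∃ N : ℕ, ∀ n ≥ N, ∀ τ : WeakDual ℂ A, IsTracialStateW τ →
      ‖τ (ψ n a) - Λ τ a‖ ≤ ε := by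
  by_contra hcon
  push_neg at hcon
  choose n hn τ hτtr hτgt using hcon
  have hmono : Tendsto n atTop atTop := tendsto_atTop_mono hn tendsto_id
  set σk : ℕ → WeakDual ℂ B := fun k => compW (τ k) (ψ (n k)) with hσk
  set μk : ℕ → WeakDual ℂ B := fun k => Λ (τ k) with hμk
  have hσst : ∀ k, IsStateW (σk k) := by
    intro k
    constructor
    · show τ k (ψ (n k) 1) = 1
      rw [hψ1, (hτtr k).1.1]
    · intro b hb
      show 0 ≤ τ k (ψ (n k) b)
      exact (hτtr k).1.2 _ (cp_nonneg _ (hψcp (n k)) hb)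
  have hμtr : ∀ k, IsTracialStateW (μk k) := fun k => hΛmaps _ (hτtr k)
  set u : ℕ → WeakDual ℂ B × WeakDual ℂ B := fun k => (σk k, μk k) with hu
  have hPc : IsCompact ({ρ : WeakDual ℂ B | IsStateW ρ} ×ˢ
      {ρ : WeakDual ℂ B | IsTracialStateW ρ}) :=
    isCompact_states.prod isCompact_tracialStates
  have hle : Filter.map u atTop ≤ 𝓟 ({ρ : WeakDual ℂ B | IsStateW ρ} ×ˢ
      {ρ : WeakDual ℂ B | IsTracialStateW ρ}) :=
    le_principal_iff.mpr (Filter.mem_map.mpr (Filter.Eventually.of_forall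
      fun k => Set.mem_prod.mpr ⟨hσst k, hμtr k⟩))
  obtain ⟨⟨σ, μ⟩, hpmem, hpcl⟩ := hPc.exists_clusterPt hle
  have hcl : MapClusterPt (σ, μ) atTop u := hpcl
  have hσ_state : IsStateW σ := hpmem.1
  have hμ_tr : IsTracialStateW μ := hpmem.2
  -- traciality of σ
  have hσtr : ∀ b c : B, σ (b * c) = σ (c * b) := by
    intro b c
    have hg : Continuous fun p : WeakDual ℂ B × WeakDual ℂ B =>
        p.1 (b * c) - p.1 (c * b) :=
      ((WeakDual.eval_continuous _).comp continuous_fst).sub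
        ((WeakDual.eval_continuous _).comp continuous_fst)
    have hclv := MapClusterPt.continuousAt_comp hg.continuousAt hcl
    have hto : Tendsto (fun k => σk k (b * c) - σk k (c * b)) atTop (𝓝 0) := by
      apply squeeze_zero_norm
        (a := fun k => 2 * ‖ψ (n k) (b * c) - ψ (n k) b * ψ (n k) c‖
          + 2 * ‖ψ (n k) (c * b) - ψ (n k) c * ψ (n k) b‖)
      · intro k
        have heq : σk k (b * c) - σk k (c * b)
            = τ k (ψ (n k) (b * c) - ψ (n k) b * ψ (n k) c)
              - τ k (ψ (n k) (c * b) - ψ (n k) c * ψ (n k) b) := by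
          simp only [hσk, compW_apply, map_sub]
          rw [(hτtr k).2 (ψ (n k) b) (ψ (n k) c)]
          ring
        rw [heq]
        calc ‖_ - _‖ ≤ ‖τ k (ψ (n k) (b * c) - ψ (n k) b * ψ (n k) c)‖
              + ‖τ k (ψ (n k) (c * b) - ψ (n k) c * ψ (n k) b)‖ := norm_sub_le _ _
          _ ≤ 2 * ‖ψ (n k) (b * c) - ψ (n k) b * ψ (n k) c‖
              + 2 * ‖ψ (n k) (c * b) - ψ (n k) c * ψ (n k) b‖ :=
            add_le_add (state_bound _ (hτtr k).1 _) (state_bound _ (hτtr k).1 _)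
      · have := (((hψmult b c).comp hmono).const_mul (2 : ℝ)).add
          (((hψmult c b).comp hmono).const_mul (2 : ℝ))
        simpa using this
    have h0 : σ (b * c) - σ (c * b) = 0 := clusterPt_eq_of_tendsto hclv hto
    exact sub_eq_zero.mp h0
  -- agreement of σ and μ on S
  have hσμS : ∀ c : S, σ (c : B) = μ (c : B) := by
    intro c
    have hg : Continuous fun p : WeakDual ℂ B × WeakDual ℂ B =>
        p.1 (c : B) - p.2 (c : B) :=
      ((WeakDual.eval_continuous _).comp continuous_fst).sub
        ((WeakDual.eval_continuous _).comp continuous_snd)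
    have hclv := MapClusterPt.continuousAt_comp hg.continuousAt hcl
    have hto : Tendsto (fun k => σk k (c : B) - μk k (c : B)) atTop (𝓝 0) := by
      apply squeeze_zero_norm (a := fun k => 2 * ‖ψ (n k) (c : B) - φ c‖)
      · intro k
        have heq : σk k (c : B) - μk k (c : B) = τ k (ψ (n k) (c : B) - φ c) := by
          simp only [hσk, hμk, compW_apply, map_sub]
          rw [hφΛ (τ k) (hτtr k) c]
        rw [heq]
        exact state_bound _ (hτtr k).1 _
      · simpa using ((hψφ c).comp hmono).const_mul (2 : ℝ)
    have h0 : σ (c : B) - μ (c : B) = 0 := clusterPt_eq_of_tendsto hclv hto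
    exact sub_eq_zero.mp h0
  -- final contradiction
  have hg : Continuous fun p : WeakDual ℂ B × WeakDual ℂ B => ‖p.1 a - p.2 a‖ :=
    (((WeakDual.eval_continuous _).comp continuous_fst).sub
      ((WeakDual.eval_continuous _).comp continuous_snd)).norm
  have hclv := MapClusterPt.continuousAt_comp hg.continuousAt hcl
  have hmem : ‖σ a - μ a‖ ∈ Set.Ici ε := by
    refine clusterPt_mem_of_closed hclv isClosed_Ici fun k => ?_
    exact le_of_lt (hτgt k)
  have hzero : σ a = μ a := by
    calc σ a = σ (E a) := hE σ ⟨hσ_state, hσtr⟩ a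
      _ = μ (E a) := hσμS ⟨E a, hES a⟩
      _ = μ a := (hE μ hμ_tr a).symm
  rw [hzero, sub_self, norm_zero] at hmem
  exact absurd (Set.mem_Ici.mp hmem) (not_le.mpr hε)

end key

end St4Aux

/-- `B` a separable unital C*-algebra, `S ⊆ B` a unital C*-subalgebra,
`E : B → B` a linear map with range in `S` with `τ (E b) = τ b` for every tracial state `τ`
of `B`; `A` a unital C*-algebra with `T(A) ≠ ∅`, `Λ : T(A) → T(B)` a surjective continuous
affine map, `φ : S → A` a unital injective *-homomorphism with `τ (φ c) = Λ τ c` for all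
`c ∈ S`, `τ ∈ T(A)`; `ψₙ : B → A` unital completely positive contractions which are
asymptotically multiplicative and asymptotically agree with `φ` on `S`.  Then for
every `ε > 0` and finite `F ⊆ B` there is `N ≥ 1` with
`sup_{τ ∈ T(A)} |τ (ψₙ a) - Λ τ a| < ε` for all `n ≥ N`, `a ∈ F`. -/
theorem statement4
    {B : Type*} [CStarAlgebra B] [PartialOrder B] [StarOrderedRing B]
    [TopologicalSpace.SeparableSpace B]
    {A : Type*} [CStarAlgebra A] [PartialOrder A] [StarOrderedRing A]
    (S : StarSubalgebra ℂ B) (hS : IsClosed (S : Set B))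
    (E : B →ₗ[ℂ] B) (hES : ∀ b : B, E b ∈ S)
    (hE : ∀ σ : WeakDual ℂ B, IsTracialStateW σ → ∀ b : B, σ b = σ (E b))
    (hTA : ∃ τ : WeakDual ℂ A, IsTracialStateW τ)
    (Λ : WeakDual ℂ A → WeakDual ℂ B)
    (hΛmaps : ∀ τ : WeakDual ℂ A, IsTracialStateW τ → IsTracialStateW (Λ τ))
    (hΛsurj : ∀ σ : WeakDual ℂ B, IsTracialStateW σ →
      ∃ τ : WeakDual ℂ A, IsTracialStateW τ ∧ Λ τ = σ)
    (hΛcont : ContinuousOn Λ {τ | IsTracialStateW τ})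
    (hΛaff : ∀ τ₁ τ₂ : WeakDual ℂ A, IsTracialStateW τ₁ → IsTracialStateW τ₂ →
      ∀ s : ℝ, 0 ≤ s → s ≤ 1 →
        Λ ((s : ℂ) • τ₁ + ((1 - s : ℝ) : ℂ) • τ₂)
          = (s : ℂ) • Λ τ₁ + ((1 - s : ℝ) : ℂ) • Λ τ₂)
    (φ : S →⋆ₐ[ℂ] A) (hφinj : Function.Injective φ)
    (hφΛ : ∀ τ : WeakDual ℂ A, IsTracialStateW τ → ∀ c : S, τ (φ c) = Λ τ (c : B))
    (ψ : ℕ → B →L[ℂ] A)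
    (hψ1 : ∀ n, ψ n 1 = 1)
    (hψcp : ∀ n, IsCompletelyPositive (ψ n))
    (hψnorm : ∀ n, ‖ψ n‖ ≤ 1)
    (hψmult : ∀ a b : B,
      Filter.Tendsto (fun n => ‖ψ n (a * b) - ψ n a * ψ n b‖) Filter.atTop (nhds 0))
    (hψφ : ∀ c : S,
      Filter.Tendsto (fun n => ‖ψ n (c : B) - φ c‖) Filter.atTop (nhds 0)) :
    ∀ ε : ℝ, 0 < ε → ∀ F : Finset B, ∃ N : ℕ, 1 ≤ N ∧ ∀ n ≥ N, ∀ a ∈ F,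
      sSup {r : ℝ | ∃ τ : WeakDual ℂ A, IsTracialStateW τ ∧ r = ‖τ (ψ n a) - Λ τ a‖} < ε := by
  intro ε hε F
  have hkey : ∀ a : B, ∃ N : ℕ, ∀ n ≥ N, ∀ τ : WeakDual ℂ A, IsTracialStateW τ →
      ‖τ (ψ n a) - Λ τ a‖ ≤ ε / 2 :=
    fun a => St4Aux.key S E hES hE Λ hΛmaps φ hφΛ ψ hψ1 hψcp hψmult hψφ a (ε / 2)
      (half_pos hε)
  choose Nf hNf using hkey
  refine ⟨F.sup Nf + 1, Nat.le_add_left 1 _, fun n hn a ha => ?_⟩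
  have hna : Nf a ≤ n := le_trans (le_trans (Finset.le_sup ha) (Nat.le_succ _)) hn
  refine lt_of_le_of_lt (Real.sSup_le ?_ (le_of_lt (half_pos hε))) (half_lt_self hε)
  rintro r ⟨τ, hτ, rfl⟩
  exact hNf a n hna τ hτ
end

section
/- Let X and X_n (n ∈ ℕ) be compact metric spaces, and suppose C(X, ℂ) is the inductive limit of the system (C(X_n, ℂ), s_n) in the following sense: there are unital *-homomorphisms s_n : C(X_n, ℂ) → C(X_{n+1}, ℂ) and s_{n,∞} : C(X_n, ℂ) → C(X, ℂ) with s_{n+1,∞} ∘ s_n = s_{n,∞} for all n, the union ⋃_n s_{n,∞}(C(X_n, ℂ)) is dense in C(X, ℂ), and ‖s_{n,∞}(a)‖ = lim_{m→∞} ‖s_{n,m}(a)‖ for every n and every a ∈ C(X_n, ℂ), where s_{n,m} := s_{m−1} ∘ ⋯ ∘ s_n for m > n. Then for any ε > 0 and any finite subset F ⊆ C(X, ℂ), there exists an integer k ≥ 1 such that for every n ≥ k there is a unital completely positive linear contraction L_n : C(X, ℂ) → C(X_n, ℂ) satisfying ‖L_n(fg) − L_n(f)L_n(g)‖ < ε for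 all f, g ∈ F and ‖s_{n,∞}(L_n(f)) − f‖ < ε for all f ∈ F. -/
open scoped ComplexOrder
open Matrix

/-- Given connecting maps `sₙ : C(Xₙ, ℂ) → C(Xₙ₊₁, ℂ)`, the composite map
`s_{n, n+m} : C(Xₙ, ℂ) → C(X_{n+m}, ℂ)`. -/
noncomputable def sComp {X : ℕ → Type*} [∀ n, TopologicalSpace (X n)]
    (s : ∀ n : ℕ, C(X n, ℂ) →⋆ₐ[ℂ] C(X (n + 1), ℂ)) (n : ℕ) :
    (m : ℕ) → (C(X n, ℂ) →⋆ₐ[ℂ] C(X (n + m), ℂ))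
  | 0 => StarAlgHom.id ℂ C(X n, ℂ)
  | m + 1 => (s (n + m)).comp (sComp s n m)

/-! ### Auxiliary lemmas -/

section DualMap

open WeakDual WeakDual.CharacterSpace

/-- The Gelfand dual point map of a unital star algebra hom between function algebras. -/
noncomputable def dualMap {Y Z : Type*} [TopologicalSpace Y] [CompactSpace Y] [T2Space Y]
    [TopologicalSpace Z] [CompactSpace Z] [T2Space Z] (Ψ : C(Y, ℂ) →⋆ₐ[ℂ] C(Z, ℂ)) : Z → Y :=
  fun z => (homeoEval Y ℂ).symm (compContinuousMap Ψ (homeoEval Z ℂ z))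

lemma dualMap_apply {Y Z : Type*} [TopologicalSpace Y] [CompactSpace Y] [T2Space Y]
    [TopologicalSpace Z] [CompactSpace Z] [T2Space Z] (Ψ : C(Y, ℂ) →⋆ₐ[ℂ] C(Z, ℂ))
    (a : C(Y, ℂ)) (z : Z) : Ψ a z = a (dualMap Ψ z) := by
  have h1 : ∀ (y : Y) (b : C(Y, ℂ)), (homeoEval Y ℂ y) b = b y := fun _ _ => rfl
  have h2 := (homeoEval Y ℂ).apply_symm_apply (compContinuousMap Ψ (homeoEval Z ℂ z))
  have h3 : (compContinuousMap Ψ (homeoEval Z ℂ z)) a = (homeoEval Z ℂ z) (Ψ a) := by simp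
  have h4 := h1 (dualMap Ψ z) a
  rw [dualMap] at h4
  rw [h2] at h4
  rw [h3] at h4
  exact ((h1 _ _).trans h4.symm).symm

lemma dualMap_continuous {Y Z : Type*} [TopologicalSpace Y] [CompactSpace Y] [T2Space Y]
    [TopologicalSpace Z] [CompactSpace Z] [T2Space Z] (Ψ : C(Y, ℂ) →⋆ₐ[ℂ] C(Z, ℂ)) :
    Continuous (dualMap Ψ) :=
  ((homeoEval Y ℂ).symm.continuous).comp <|
    (map_continuous (compContinuousMap Ψ)).comp (homeoEval Z ℂ).continuous

lemma point_eq_of_forall {Y : Type*} [MetricSpace Y] {u v : Y}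
    (h : ∀ a : C(Y, ℂ), a u = a v) : u = v := by
  have := h ⟨fun w => ((dist w u : ℝ) : ℂ),
    Complex.continuous_ofReal.comp (continuous_id.dist continuous_const)⟩
  simp only [ContinuousMap.coe_mk, dist_self] at this
  have : dist v u = 0 := by exact_mod_cast this.symm
  exact (eq_of_dist_eq_zero this).symm

end DualMap

section System
variable {X : Type*} [TopologicalSpace X] [CompactSpace X]
  {Xn : ℕ → Type*} [∀ n, TopologicalSpace (Xn n)]
  (s : ∀ n : ℕ, C(Xn n, ℂ) →⋆ₐ[ℂ] C(Xn (n + 1), ℂ))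
  (sInfty : ∀ n : ℕ, C(Xn n, ℂ) →⋆ₐ[ℂ] C(X, ℂ))
  (hcompat : ∀ n : ℕ, (sInfty (n + 1)).comp (s n) = sInfty n)

set_option linter.unusedSectionVars false

include hcompat in
lemma sInfty_sComp (n m : ℕ) (a : C(Xn n, ℂ)) :
    sInfty (n + m) (sComp s n m a) = sInfty n a := by
  induction m with
  | zero => rfl
  | succ m ih =>
    have h := DFunLike.congr_fun (hcompat (n + m)) (sComp s n m a)
    calc sInfty (n + (m+1)) (sComp s n (m+1) a)
        = sInfty ((n + m) + 1) ((s (n + m)) (sComp s n m a)) := rfl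
      _ = sInfty (n + m) (sComp s n m a) := h
      _ = sInfty n a := ih

include hcompat in
lemma lift_level {η : ℝ} {n N : ℕ} (hnN : n ≤ N) (f : C(X, ℂ))
    (h : ∃ g : C(Xn n, ℂ), ‖sInfty n g - f‖ < η) :
    ∃ g : C(Xn N, ℂ), ‖sInfty N g - f‖ < η := by
  obtain ⟨d, rfl⟩ := Nat.le.dest hnN
  obtain ⟨g, hg⟩ := h
  exact ⟨sComp s n d g, by rwa [sInfty_sComp s sInfty hcompat]⟩

include hcompat in
lemma approx_common_level (hdense : Dense (⋃ n, Set.range (sInfty n)))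
    (G : Finset C(X, ℂ)) {η : ℝ} (hη : 0 < η) :
    ∃ k₀ : ℕ, ∀ f ∈ G, ∃ g : C(Xn k₀, ℂ), ‖sInfty k₀ g - f‖ < η := by
  classical
  induction G using Finset.induction with
  | empty => exact ⟨0, by simp⟩
  | @insert a G ha ih =>
    obtain ⟨k', hk'⟩ := ih
    have hmem := hdense a
    rw [Metric.mem_closure_iff] at hmem
    obtain ⟨b, hb, hab⟩ := hmem η hη
    obtain ⟨Sn, hSn⟩ := Set.mem_iUnion.mp hb
    obtain ⟨g₀, hg₀⟩ := Set.mem_range.mp hSn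
    refine ⟨max Sn k', fun f hf => ?_⟩
    rcases Finset.mem_insert.mp hf with rfl | hf
    · refine lift_level s sInfty hcompat (le_max_left Sn k') f ⟨g₀, ?_⟩
      rw [hg₀, ← dist_eq_norm, dist_comm]
      exact hab
    · exact lift_level s sInfty hcompat (le_max_right Sn k') f (hk' f hf)

end System

lemma finset_unifCont {Y : Type*} [MetricSpace Y] [CompactSpace Y] (G : Finset C(Y, ℂ))
    {η : ℝ} (hη : 0 < η) :
    ∃ γ > 0, ∀ g ∈ G, ∀ w w' : Y, dist w w' < γ → dist (g w) (g w') < η := by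
  classical
  induction G using Finset.induction with
  | empty => exact ⟨1, one_pos, by simp⟩
  | @insert a G ha ih =>
    obtain ⟨γ, hγ, hG⟩ := ih
    have hua := CompactSpace.uniformContinuous_of_continuous (map_continuous a)
    rw [Metric.uniformContinuous_iff] at hua
    obtain ⟨δa, hδa, hda⟩ := hua η hη
    refine ⟨min δa γ, lt_min hδa hγ, fun g hg w w' hww => ?_⟩
    rcases Finset.mem_insert.mp hg with rfl | hg
    · exact hda (lt_of_lt_of_le hww (min_le_left _ _))
    · exact hG g hg w w' (lt_of_lt_of_le hww (min_le_right _ _))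

open scoped Matrix.Norms.L2Operator in
noncomputable instance matCStarAux (r : ℕ) : CStarAlgebra (Matrix (Fin r) (Fin r) ℂ) := { }

open scoped Matrix.Norms.L2Operator in
lemma isCompletelyPositive_of_sum_eval {X Y : Type*} [TopologicalSpace X]
    [MetricSpace Y] [CompactSpace Y] {ι : Type*} [DecidableEq ι] (t : Finset ι) (x : ι → X)
    (v : ι → Y → ℝ) (hvc : ∀ i, Continuous (v i)) (hnn : ∀ i ∈ t, ∀ w, 0 ≤ v i w)
    (L : C(X, ℂ) → C(Y, ℂ))
    (hL : ∀ f w, L f w = ∑ i ∈ t, ((v i w : ℝ) : ℂ) * f (x i)) :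
    IsCompletelyPositive L := by
  rintro r M ⟨N, rfl⟩
  set A : ι → Matrix (Fin r) (Fin r) ℂ := fun i => N.map (fun c => c (x i)) with hA
  have contP : Continuous fun w => ∑ i ∈ t, ((v i w : ℝ) : ℂ) • ((A i)ᴴ * (A i)) := by
    refine continuous_finset_sum _ fun i _ => ?_
    exact (Complex.continuous_ofReal.comp (hvc i)).smul continuous_const
  set P : C(Y, Matrix (Fin r) (Fin r) ℂ) := ⟨_, contP⟩ with hPdef
  letI po : PartialOrder C(Y, Matrix (Fin r) (Fin r) ℂ) := CStarAlgebra.spectralOrder _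
  letI sor : StarOrderedRing C(Y, Matrix (Fin r) (Fin r) ℂ) :=
    CStarAlgebra.spectralOrderedRing _
  have contB : ∀ i, Continuous fun w => ((Real.sqrt (v i w) : ℝ) : ℂ) • A i := fun i =>
    (Complex.continuous_ofReal.comp ((Real.continuous_sqrt).comp (hvc i))).smul continuous_const
  set B : ι → C(Y, Matrix (Fin r) (Fin r) ℂ) :=
    fun i => ⟨fun w => ((Real.sqrt (v i w) : ℝ) : ℂ) • A i, contB i⟩ with hB
  have hP : (0 : C(Y, Matrix (Fin r) (Fin r) ℂ)) ≤ P := by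
    have hPsum : P = ∑ i ∈ t, star (B i) * B i := by
      refine ContinuousMap.ext fun w => ?_
      have h1 : (∑ i ∈ t, star (B i) * B i) w = ∑ i ∈ t, star ((B i) w) * (B i) w := by simp
      rw [h1, hPdef, ContinuousMap.coe_mk]
      refine Finset.sum_congr rfl fun i hi => ?_
      rw [hB]
      simp only [ContinuousMap.coe_mk]
      rw [star_smul, Matrix.star_eq_conjTranspose, smul_mul_assoc, mul_smul_comm, smul_smul]
      congr 1
      rw [Complex.star_def, Complex.conj_ofReal, ← Complex.ofReal_mul,
        Real.mul_self_sqrt (hnn i hi w)]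
    rw [hPsum]
    exact Finset.sum_nonneg fun i _ => star_mul_self_nonneg _
  set S : C(Y, Matrix (Fin r) (Fin r) ℂ) := CFC.sqrt P with hSdef
  have hS : S * S = P := CFC.sqrt_mul_sqrt_self P hP
  have hSa : IsSelfAdjoint S := IsSelfAdjoint.of_nonneg (CFC.sqrt_nonneg P)
  have hSS : star S * S = P := by rw [hSa.star_eq, hS]
  refine ⟨Matrix.of fun a b => ⟨fun w => S w a b, ?_⟩, ?_⟩
  · exact (continuous_apply b).comp ((continuous_apply a).comp (map_continuous S))
  · apply Matrix.ext
    intro a b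
    apply ContinuousMap.ext
    intro w
    have lhs : ((Nᴴ * N).map L) a b w = P w a b := by
      rw [Matrix.map_apply, hL]
      have hPw : P w a b = ∑ i ∈ t, ((v i w : ℝ) : ℂ) * (((A i)ᴴ * (A i)) a b) := by
        rw [hPdef, ContinuousMap.coe_mk, Matrix.sum_apply]
        exact Finset.sum_congr rfl fun i _ => by rw [Matrix.smul_apply, smul_eq_mul]
      rw [hPw]
      refine Finset.sum_congr rfl fun i _ => ?_
      congr 1
      rw [Matrix.mul_apply]
      simp only [Matrix.conjTranspose_apply, ContinuousMap.sum_apply, ContinuousMap.mul_apply,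
        ContinuousMap.star_apply]
      rw [Matrix.mul_apply]
      refine Finset.sum_congr rfl fun c _ => ?_
      simp [hA, Matrix.conjTranspose_apply, Matrix.map_apply]
    rw [lhs]
    have rhs : ∀ (NN : Matrix (Fin r) (Fin r) C(Y,ℂ)), (NNᴴ * NN) a b w
        = ∑ c, (star (NN c a w)) * NN c b w := by
      intro NN
      rw [Matrix.mul_apply]
      simp [Matrix.conjTranspose_apply]
    rw [rhs]
    have hPw2 : P w a b = ((star S * S) w) a b := by rw [hSS]
    rw [hPw2]
    rw [ContinuousMap.mul_apply, ContinuousMap.star_apply, Matrix.mul_apply]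
    simp [Matrix.conjTranspose_apply, Matrix.of_apply, ContinuousMap.coe_mk]

lemma subsingleton_continuousMap_of_isEmpty {Z : Type*} [TopologicalSpace Z] [IsEmpty Z] :
    Subsingleton C(Z, ℂ) :=
  ⟨fun f g => ContinuousMap.ext fun z => (IsEmpty.false z).elim⟩

set_option maxHeartbeats 2000000 in
/-- Suppose `C(X, ℂ)` is the inductive limit of the system
`(C(Xₙ, ℂ), sₙ)` of algebras of continuous functions on compact metric spaces: there are
unital *-homomorphisms `s_{n,∞} : C(Xₙ, ℂ) → C(X, ℂ)` with `s_{n+1,∞} ∘ sₙ = s_{n,∞}`,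
the union of their ranges is dense, and `‖s_{n,∞} a‖ = lim_m ‖s_{n,n+m} a‖`.  Then for every
`ε > 0` and finite `F ⊆ C(X, ℂ)` there is `k ≥ 1` such that for every `n ≥ k` there is a
unital completely positive linear contraction `Lₙ : C(X, ℂ) → C(Xₙ, ℂ)` which is
`ε`-`F`-multiplicative and satisfies `‖s_{n,∞} (Lₙ f) - f‖ < ε` for all `f ∈ F`. -/
theorem statement7 (X : Type*) [MetricSpace X] [CompactSpace X]
    (Xn : ℕ → Type*) [∀ n, MetricSpace (Xn n)] [∀ n, CompactSpace (Xn n)]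
    (s : ∀ n : ℕ, C(Xn n, ℂ) →⋆ₐ[ℂ] C(Xn (n + 1), ℂ))
    (sInfty : ∀ n : ℕ, C(Xn n, ℂ) →⋆ₐ[ℂ] C(X, ℂ))
    (hcompat : ∀ n : ℕ, (sInfty (n + 1)).comp (s n) = sInfty n)
    (hdense : Dense (⋃ n, Set.range (sInfty n)))
    (hnorm : ∀ n : ℕ, ∀ a : C(Xn n, ℂ),
      Filter.Tendsto (fun m => ‖sComp s n m a‖) Filter.atTop (nhds ‖sInfty n a‖)) :
    ∀ ε : ℝ, 0 < ε → ∀ F : Finset C(X, ℂ), ∃ k : ℕ, 1 ≤ k ∧ ∀ n, k ≤ n →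
      ∃ L : C(X, ℂ) →L[ℂ] C(Xn n, ℂ),
        L 1 = 1 ∧ IsCompletelyPositive L ∧ ‖L‖ ≤ 1 ∧
        (∀ f ∈ F, ∀ g ∈ F, ‖L (f * g) - L f * L g‖ < ε) ∧
        (∀ f ∈ F, ‖sInfty n (L f) - f‖ < ε) := by
  classical
  intro ε hε F
  by_cases hX : Nonempty X
  case neg =>
    -- X is empty, so eventually all `Xn n` are empty and everything is trivial.
    haveI hXe : IsEmpty X := not_nonempty_iff.mp hX
    haveI hsub : Subsingleton C(X, ℂ) := subsingleton_continuousMap_of_isEmpty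
    have h10 : ‖sInfty 0 (1 : C(Xn 0, ℂ))‖ = 0 := by
      rw [Subsingleton.elim (sInfty 0 1) 0, norm_zero]
    have htt := hnorm 0 1
    rw [h10] at htt
    obtain ⟨m₀, hm₀⟩ := Filter.eventually_atTop.mp
      (htt.eventually_lt_const (by norm_num : (0:ℝ) < 1))
    have hempty0 : IsEmpty (Xn (0 + m₀)) := by
      by_contra hne
      rw [not_isEmpty_iff] at hne
      obtain ⟨y⟩ := hne
      have h1 : (sComp s 0 m₀) 1 = 1 := map_one _
      have h2 := hm₀ m₀ le_rfl
      rw [h1] at h2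
      have hge : (1:ℝ) ≤ ‖(1 : C(Xn (0 + m₀), ℂ))‖ := by
        have := ContinuousMap.norm_coe_le_norm (1 : C(Xn (0 + m₀), ℂ)) y
        simpa using this
      linarith
    have hstep : ∀ N, IsEmpty (Xn N) → IsEmpty (Xn (N+1)) := by
      intro N hN
      by_contra hne
      rw [not_isEmpty_iff] at hne
      obtain ⟨y⟩ := hne
      haveI := hN
      haveI : Subsingleton C(Xn N, ℂ) := subsingleton_continuousMap_of_isEmpty
      have h1 : (1 : C(Xn (N+1), ℂ)) = 0 := by
        calc (1 : C(Xn (N+1), ℂ)) = s N 1 := (map_one (s N)).symm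
          _ = s N 0 := by rw [Subsingleton.elim (1 : C(Xn N, ℂ)) 0]
          _ = 0 := map_zero _
      have h2 := ContinuousMap.congr_fun h1 y
      simpa using h2
    have hemp' : ∀ d, IsEmpty (Xn (0 + m₀ + d)) := by
      intro d
      induction d with
      | zero => exact hempty0
      | succ d ih => exact hstep _ ih
    refine ⟨max (0 + m₀) 1, le_max_right _ _, fun n hn => ?_⟩
    have hnm : 0 + m₀ ≤ n := le_trans (le_max_left _ _) hn
    haveI hem : IsEmpty (Xn n) := by
      obtain ⟨d, rfl⟩ := Nat.le.dest hnm
      exact hemp' d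
    haveI hsubn : Subsingleton C(Xn n, ℂ) := subsingleton_continuousMap_of_isEmpty
    refine ⟨0, Subsingleton.elim _ _, ?_, by simp, ?_, ?_⟩
    · rintro r M ⟨N, rfl⟩
      refine ⟨0, ?_⟩
      haveI : Subsingleton (Matrix (Fin r) (Fin r) C(Xn n, ℂ)) :=
        ⟨fun A B => Matrix.ext fun i j => Subsingleton.elim _ _⟩
      exact Subsingleton.elim _ _
    · intro f _ g _
      have h0 : ((0 : C(X,ℂ) →L[ℂ] C(Xn n,ℂ)) (f*g)
          - (0 : C(X,ℂ) →L[ℂ] C(Xn n,ℂ)) f * (0 : C(X,ℂ) →L[ℂ] C(Xn n,ℂ)) g) = 0 := by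
        simp
      rw [h0, norm_zero]
      exact hε
    · intro f _
      have h0 : sInfty n ((0 : C(X,ℂ) →L[ℂ] C(Xn n,ℂ)) f) - f = 0 := Subsingleton.elim _ _
      rw [h0, norm_zero]
      exact hε
  case pos =>
    obtain ⟨x₀⟩ := hX
    haveI : Nonempty X := ⟨x₀⟩
    have hXnne : ∀ n, Nonempty (Xn n) := by
      intro n
      by_contra hne
      haveI hem : IsEmpty (Xn n) := not_nonempty_iff.mp hne
      haveI : Subsingleton C(Xn n, ℂ) := subsingleton_continuousMap_of_isEmpty
      have h1 : (1 : C(X, ℂ)) = 0 := by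
        calc (1 : C(X,ℂ)) = sInfty n 1 := (_root_.map_one _).symm
          _ = sInfty n 0 := by rw [Subsingleton.elim (1 : C(Xn n,ℂ)) 0]
          _ = 0 := map_zero _
      have h2 := ContinuousMap.congr_fun h1 x₀
      simpa using h2
    -- a bound on the norms of members of F
    set B : ℝ := 1 + ∑ f ∈ F, ‖f‖ with hBdef
    have hB1 : 1 ≤ B := le_add_of_nonneg_right (Finset.sum_nonneg fun f _ => norm_nonneg f)
    have hBf : ∀ f ∈ F, ‖f‖ ≤ B := by
      intro f hf
      have h1 : ‖f‖ ≤ ∑ g ∈ F, ‖g‖ := Finset.single_le_sum (fun g _ => norm_nonneg g) hf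
      linarith
    have hBpos : 0 < B := lt_of_lt_of_le one_pos hB1
    set η : ℝ := ε / (8 * B) with hηdef
    have hη : 0 < η := div_pos hε (by positivity)
    have hη8 : 8 * B * η = ε := by
      rw [hηdef]
      field_simp
    have hηε3 : 3 * η < ε := by nlinarith [hη]
    have hηεB : B * (3 * η) < ε := by nlinarith [hη, hηε3]
    -- approximants at a common level k₀
    obtain ⟨k₀, hk₀⟩ := approx_common_level s sInfty hcompat hdense F hη
    have hgex : ∀ f : C(X,ℂ), ∃ g : C(Xn k₀, ℂ), f ∈ F → ‖sInfty k₀ g - f‖ < η := by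
      intro f
      by_cases hf : f ∈ F
      · obtain ⟨g, hg⟩ := hk₀ f hf
        exact ⟨g, fun _ => hg⟩
      · exact ⟨0, fun h => absurd h hf⟩
    choose gap hgap using hgex
    -- the dual point map of sInfty k₀
    set p : X → Xn k₀ := dualMap (sInfty k₀) with hpdef
    have hp : ∀ (a : C(Xn k₀, ℂ)) (x : X), sInfty k₀ a x = a (p x) := fun a x =>
      dualMap_apply _ a x
    set K : Set (Xn k₀) := Set.range p with hKdef
    have hKne : K.Nonempty := ⟨p x₀, ⟨x₀, rfl⟩⟩
    have hclose : ∀ f ∈ F, ∀ x : X, ‖gap f (p x) - f x‖ < η := by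
      intro f hf x
      have h1 := ContinuousMap.norm_coe_le_norm (sInfty k₀ (gap f) - f) x
      have h2 : (sInfty k₀ (gap f) - f) x = gap f (p x) - f x := by
        rw [ContinuousMap.sub_apply, hp]
      rw [h2] at h1
      exact lt_of_le_of_lt h1 (hgap f hf)
    -- a uniform continuity modulus for the approximants
    obtain ⟨γ₀, hγ₀, hmod⟩ := finset_unifCont (F.image gap) hη
    set γ : ℝ := γ₀ / 4 with hγdef
    have hγpos : 0 < γ := by positivity
    -- the key interpolation estimate
    have key : ∀ f ∈ F, ∀ u1 u2 : X, dist (p u1) (p u2) < γ₀ → ‖f u1 - f u2‖ < 3 * η := by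
      intro f hf u1 u2 hd
      have h1 := hclose f hf u1
      have h2 := hclose f hf u2
      have h3 : dist (gap f (p u1)) (gap f (p u2)) < η :=
        hmod (gap f) (Finset.mem_image_of_mem gap hf) _ _ hd
      have heq : f u1 - f u2 = -(gap f (p u1) - f u1) + (gap f (p u1) - gap f (p u2))
          + (gap f (p u2) - f u2) := by ring
      have hle : ‖f u1 - f u2‖ ≤ ‖gap f (p u1) - f u1‖ + dist (gap f (p u1)) (gap f (p u2))
          + ‖gap f (p u2) - f u2‖ := by
        rw [heq, dist_eq_norm]
        refine (norm_add₃_le).trans ?_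
        rw [norm_neg]
      linarith
    -- the distance-to-K function and the tail bound from hnorm
    have hcontK : Continuous fun w : Xn k₀ => ((Metric.infDist w K : ℝ) : ℂ) :=
      Complex.continuous_ofReal.comp (Metric.continuous_infDist_pt K)
    set aK : C(Xn k₀, ℂ) := ⟨_, hcontK⟩ with haKdef
    have haK0 : ‖sInfty k₀ aK‖ = 0 := by
      have h0 : sInfty k₀ aK = 0 := by
        refine ContinuousMap.ext fun x => ?_
        rw [hp]
        simp only [haKdef, ContinuousMap.coe_mk, ContinuousMap.zero_apply]
        rw [Metric.infDist_zero_of_mem (show p x ∈ K from Set.mem_range_self x)]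
        simp
      rw [h0, norm_zero]
    have httK := hnorm k₀ aK
    rw [haK0] at httK
    obtain ⟨J, hJ⟩ := Filter.eventually_atTop.mp (httK.eventually_lt_const hγpos)
    refine ⟨k₀ + J + 1, by omega, fun n hn => ?_⟩
    obtain ⟨m, rfl⟩ := Nat.le.dest (show k₀ ≤ n by omega)
    have hmJ : J ≤ m := by omega
    haveI hYne : Nonempty (Xn (k₀ + m)) := hXnne _
    -- the dual point map σ of the connecting morphism
    set σ : Xn (k₀ + m) → Xn k₀ := dualMap (sComp s k₀ m) with hσdef
    have hσ : ∀ (a : C(Xn k₀,ℂ)) (z : Xn (k₀ + m)), (sComp s k₀ m a) z = a (σ z) := fun a z =>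
      dualMap_apply _ a z
    have hσc : Continuous σ := dualMap_continuous _
    have hdistK : ∀ z, Metric.infDist (σ z) K < γ := by
      intro z
      have h1 : ‖(sComp s k₀ m aK) z‖ ≤ ‖sComp s k₀ m aK‖ :=
        ContinuousMap.norm_coe_le_norm _ z
      have h2 := hJ m hmJ
      have h3 : (sComp s k₀ m aK) z = ((Metric.infDist (σ z) K : ℝ) : ℂ) := by
        rw [hσ]
        rfl
      rw [h3, Complex.norm_real, Real.norm_eq_abs, abs_of_nonneg Metric.infDist_nonneg] at h1
      linarith
    have hxsel : ∀ z : Xn (k₀ + m), ∃ xx : X, dist (σ z) (p xx) < γ := by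
      intro z
      obtain ⟨q, hqK, hq⟩ := (Metric.infDist_lt_iff hKne).mp (hdistK z)
      obtain ⟨xx, rfl⟩ := hqK
      exact ⟨xx, hq⟩
    choose xs hxs using hxsel
    -- uniform continuity modulus of σ
    have hσu := CompactSpace.uniformContinuous_of_continuous hσc
    rw [Metric.uniformContinuous_iff] at hσu
    obtain ⟨δ, hδpos, hδ⟩ := hσu γ hγpos
    -- a finite cover of Xn (k₀+m) by δ/2-balls
    obtain ⟨t, ht⟩ := IsCompact.elim_finite_subcover (isCompact_univ (X := Xn (k₀+m)))
        (fun y => Metric.ball y (δ/2)) (fun _ => Metric.isOpen_ball)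
        (fun z _ => Set.mem_iUnion.mpr ⟨z, Metric.mem_ball_self (by positivity)⟩)
    have hcov : ∀ w : Xn (k₀+m), ∃ y ∈ t, dist w y < δ/2 := by
      intro w
      have h1 := ht (Set.mem_univ w)
      simp only [Set.mem_iUnion, Metric.mem_ball] at h1
      obtain ⟨y, hy, hw⟩ := h1
      exact ⟨y, hy, hw⟩
    -- the partition of unity
    set bump : Xn (k₀+m) → Xn (k₀+m) → ℝ := fun y w => max (δ/2 - dist w y) 0 with hbump
    have hbc : ∀ y, Continuous (bump y) := fun y =>
      (continuous_const.sub (continuous_id.dist continuous_const)).max continuous_const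
    set tot : Xn (k₀+m) → ℝ := fun w => ∑ y ∈ t, bump y w with htotdef
    have htc : Continuous tot := continuous_finset_sum _ fun y _ => hbc y
    have htpos : ∀ w, 0 < tot w := by
      intro w
      obtain ⟨y, hy, hw⟩ := hcov w
      refine Finset.sum_pos' (fun z _ => le_max_right _ _) ⟨y, hy, ?_⟩
      exact lt_max_iff.mpr (Or.inl (by linarith))
    set v : Xn (k₀+m) → Xn (k₀+m) → ℝ := fun y w => bump y w / tot w with hvdef
    have hvc : ∀ y, Continuous (v y) := fun y => (hbc y).div htc fun w => (htpos w).ne'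
    have hv0 : ∀ y w, 0 ≤ v y w := fun y w => div_nonneg (le_max_right _ _) (htpos w).le
    have hv1 : ∀ w, ∑ y ∈ t, v y w = 1 := by
      intro w
      rw [hvdef, ← Finset.sum_div]
      exact div_self (htpos w).ne'
    have hvsupp : ∀ y w, v y w ≠ 0 → dist w y < δ/2 := by
      intro y w hvyw
      by_contra hge
      push_neg at hge
      apply hvyw
      have hb0 : bump y w = 0 := max_eq_right (by linarith)
      show bump y w / tot w = 0
      rw [hb0, zero_div]
    -- the finite rank map
    have hvcC : ∀ y, Continuous fun w => ((v y w : ℝ) : ℂ) := fun y =>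
      Complex.continuous_ofReal.comp (hvc y)
    set hC : Xn (k₀+m) → C(Xn (k₀+m), ℂ) := fun y => ⟨fun w => ((v y w : ℝ) : ℂ), hvcC y⟩
      with hhC
    set Lfun : C(X, ℂ) → C(Xn (k₀+m), ℂ) := fun f => ∑ y ∈ t, f (xs y) • hC y with hLfun
    have Lapp : ∀ f w, Lfun f w = ∑ y ∈ t, ((v y w : ℝ):ℂ) * f (xs y) := by
      intro f w
      rw [hLfun]
      simp [hhC, mul_comm]
    have hbound : ∀ f, ‖Lfun f‖ ≤ 1 * ‖f‖ := by
      intro f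
      rw [one_mul]
      refine (ContinuousMap.norm_le _ (norm_nonneg f)).mpr fun w => ?_
      rw [Lapp]
      calc ‖∑ y ∈ t, ((v y w : ℝ):ℂ) * f (xs y)‖
          ≤ ∑ y ∈ t, ‖((v y w : ℝ):ℂ) * f (xs y)‖ := norm_sum_le _ _
        _ ≤ ∑ y ∈ t, v y w * ‖f‖ := by
            refine Finset.sum_le_sum fun y hy => ?_
            rw [norm_mul, Complex.norm_real, Real.norm_eq_abs, abs_of_nonneg (hv0 y w)]
            exact mul_le_mul_of_nonneg_left (ContinuousMap.norm_coe_le_norm f (xs y)) (hv0 y w)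
        _ = ‖f‖ := by rw [← Finset.sum_mul, hv1, one_mul]
    set Llin : C(X, ℂ) →ₗ[ℂ] C(Xn (k₀+m), ℂ) :=
      { toFun := Lfun
        map_add' := by
          intro f g
          simp only [hLfun]
          simp [add_smul, Finset.sum_add_distrib]
        map_smul' := by
          intro c f
          simp only [hLfun]
          simp [smul_smul, Finset.smul_sum] } with hLlin
    set L : C(X, ℂ) →L[ℂ] C(Xn (k₀+m), ℂ) := Llin.mkContinuous 1 hbound with hLdef
    have hLcoe : ∀ f, L f = Lfun f := fun f => rfl
    have hv1C : ∀ w, ∑ y ∈ t, ((v y w : ℝ):ℂ) = 1 := by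
      intro w
      rw [← Complex.ofReal_sum, hv1, Complex.ofReal_one]
    refine ⟨L, ?_, ?_, ?_, ?_, ?_⟩
    · -- unital
      refine ContinuousMap.ext fun w => ?_
      rw [hLcoe, Lapp]
      simp only [ContinuousMap.one_apply, mul_one]
      rw [hv1C]
    · -- completely positive
      exact isCompletelyPositive_of_sum_eval t xs v hvc (fun y _ w => hv0 y w) L
        (fun f w => by rw [hLcoe, Lapp])
    · -- contraction
      exact Llin.mkContinuous_norm_le zero_le_one hbound
    · -- approximate multiplicativity
      intro f hf g hg
      have hfB : ‖f‖ ≤ B := hBf f hf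
      rw [ContinuousMap.norm_lt_iff _ hε]
      intro w
      rw [ContinuousMap.sub_apply, ContinuousMap.mul_apply, hLcoe, hLcoe, hLcoe,
        Lapp, Lapp, Lapp]
      have hstep1 : (∑ y ∈ t, ((v y w : ℝ):ℂ) * (f*g) (xs y))
          - (∑ y ∈ t, ((v y w : ℝ):ℂ) * f (xs y)) * (∑ y ∈ t, ((v y w : ℝ):ℂ) * g (xs y))
          = ∑ y ∈ t, ∑ z ∈ t, ((v y w : ℝ):ℂ) * ((v z w : ℝ):ℂ)
              * (f (xs y) * (g (xs y) - g (xs z))) := by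
        rw [Finset.sum_mul_sum, ← Finset.sum_sub_distrib]
        refine Finset.sum_congr rfl fun y hy => ?_
        have h1 : ((v y w : ℝ):ℂ) * (f*g) (xs y)
            = ∑ z ∈ t, ((v y w : ℝ):ℂ) * ((v z w : ℝ):ℂ) * (f (xs y) * g (xs y)) := by
          have h2 : ∑ z ∈ t, ((v y w : ℝ):ℂ) * ((v z w : ℝ):ℂ) * (f (xs y) * g (xs y))
              = (∑ z ∈ t, ((v z w : ℝ):ℂ)) * (((v y w : ℝ):ℂ) * (f (xs y) * g (xs y))) := by
            rw [Finset.sum_mul]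
            exact Finset.sum_congr rfl fun z _ => by ring
          rw [h2, hv1C, one_mul, ContinuousMap.mul_apply]
        rw [h1, ← Finset.sum_sub_distrib]
        exact Finset.sum_congr rfl fun z _ => by ring
      rw [hstep1]
      have hperterm : ∀ y ∈ t, ∀ z ∈ t,
          ‖((v y w : ℝ):ℂ) * ((v z w : ℝ):ℂ) * (f (xs y) * (g (xs y) - g (xs z)))‖
          ≤ v y w * v z w * (B * (3*η)) := by
        intro y hy z hz
        by_cases h0 : v y w = 0
        · rw [h0]
          simp
        by_cases h0' : v z w = 0
        · rw [h0']
          simp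
        have hdyz : dist y z < δ := by
          have h1 := hvsupp y w h0
          have h2 := hvsupp z w h0'
          have h3 : dist y z ≤ dist y w + dist w z := dist_triangle y w z
          rw [dist_comm y w] at h3
          linarith
        have hσyz : dist (σ y) (σ z) < γ := hδ hdyz
        have hpyz : dist (p (xs y)) (p (xs z)) < γ₀ := by
          have h1 := hxs y
          have h2 := hxs z
          have h3 : dist (p (xs y)) (p (xs z)) ≤ dist (p (xs y)) (σ y) + dist (σ y) (σ z)
              + dist (σ z) (p (xs z)) := dist_triangle4 _ _ _ _
          rw [dist_comm (p (xs y)) (σ y)] at h3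
          have : γ + γ + γ < γ₀ := by
            rw [hγdef]
            linarith
          linarith
        have hgyz : ‖g (xs y) - g (xs z)‖ < 3 * η := key g hg _ _ hpyz
        rw [norm_mul, norm_mul, norm_mul, Complex.norm_real, Complex.norm_real,
          Real.norm_eq_abs, Real.norm_eq_abs, abs_of_nonneg (hv0 y w),
          abs_of_nonneg (hv0 z w)]
        refine mul_le_mul_of_nonneg_left ?_ (mul_nonneg (hv0 y w) (hv0 z w))
        exact mul_le_mul (le_trans (ContinuousMap.norm_coe_le_norm f (xs y)) hfB) hgyz.le
          (norm_nonneg _) (le_trans (norm_nonneg _) hfB)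
      calc ‖∑ y ∈ t, ∑ z ∈ t, ((v y w : ℝ):ℂ) * ((v z w : ℝ):ℂ)
              * (f (xs y) * (g (xs y) - g (xs z)))‖
          ≤ ∑ y ∈ t, ∑ z ∈ t, v y w * v z w * (B * (3*η)) := by
            refine (norm_sum_le _ _).trans (Finset.sum_le_sum fun y hy => ?_)
            exact (norm_sum_le _ _).trans (Finset.sum_le_sum fun z hz => hperterm y hy z hz)
        _ = B * (3*η) := by
            have h1 : ∀ y, ∑ z ∈ t, v y w * v z w * (B * (3*η)) = v y w * (B * (3*η)) := by
              intro y
              have h2 : ∑ z ∈ t, v y w * v z w * (B * (3*η))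
                  = (∑ z ∈ t, v z w) * (v y w * (B * (3*η))) := by
                rw [Finset.sum_mul]
                exact Finset.sum_congr rfl fun z _ => by ring
              rw [h2, hv1, one_mul]
            rw [Finset.sum_congr rfl fun y _ => h1 y, ← Finset.sum_mul, hv1, one_mul]
        _ < ε := hηεB
    · -- approximate inverse of sInfty
      intro f hf
      rw [ContinuousMap.norm_lt_iff _ hε]
      intro xx
      have hev : sInfty (k₀+m) (L f) xx = Lfun f (dualMap (sInfty (k₀+m)) xx) := by
        rw [hLcoe]
        exact dualMap_apply _ _ xx
      set w : Xn (k₀ + m) := dualMap (sInfty (k₀+m)) xx with hwdef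
      rw [ContinuousMap.sub_apply, hev, Lapp]
      have hσw : σ w = p xx := by
        apply point_eq_of_forall
        intro a
        have h1 : a (σ w) = (sComp s k₀ m a) w := (hσ a w).symm
        have h2 : (sComp s k₀ m a) w = sInfty (k₀+m) (sComp s k₀ m a) xx :=
          (dualMap_apply _ _ xx).symm
        rw [h1, h2, sInfty_sComp s sInfty hcompat, hp]
      have hfxx : (f xx : ℂ) = ∑ y ∈ t, ((v y w : ℝ):ℂ) * f xx := by
        rw [← Finset.sum_mul, hv1C, one_mul]
      rw [hfxx, ← Finset.sum_sub_distrib]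
      have hterm : ∀ y ∈ t, ‖((v y w : ℝ):ℂ) * f (xs y) - ((v y w : ℝ):ℂ) * f xx‖
          ≤ v y w * (3*η) := by
        intro y hy
        by_cases h0 : v y w = 0
        · rw [h0]
          simp
        have hdwy : dist w y < δ/2 := hvsupp y w h0
        have hσwy : dist (σ y) (σ w) < γ := by
          refine hδ ?_
          rw [dist_comm]
          linarith
        have hpyx : dist (p (xs y)) (p xx) < γ₀ := by
          have h1 := hxs y
          have h2 : dist (p (xs y)) (p xx) ≤ dist (p (xs y)) (σ y) + dist (σ y) (p xx) :=
            dist_triangle _ _ _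
          rw [dist_comm (p (xs y)) (σ y)] at h2
          rw [hσw] at hσwy
          have : γ + γ < γ₀ := by
            rw [hγdef]
            linarith
          linarith
        have hkey := key f hf _ _ hpyx
        rw [← mul_sub, norm_mul, Complex.norm_real, Real.norm_eq_abs, abs_of_nonneg (hv0 y w)]
        exact mul_le_mul_of_nonneg_left hkey.le (hv0 y w)
      calc ‖∑ y ∈ t, (((v y w : ℝ):ℂ) * f (xs y) - ((v y w : ℝ):ℂ) * f xx)‖
          ≤ ∑ y ∈ t, v y w * (3*η) := by
            exact (norm_sum_le _ _).trans (Finset.sum_le_sum hterm)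
        _ = 3*η := by rw [← Finset.sum_mul, hv1, one_mul]
        _ < ε := hηε3
end
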